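/- arXiv:1907.00305 — 2 statements merged into one kernel-verified Lean document; each statement's English description precedes it below -/
import Mathlib

section
/- The Petersen graph is a brick. -/
open SimpleGraph

/-- A graph has a perfect matching. -/
def HasPerfectMatching {V : Type*} (G : SimpleGraph V) : Prop :=
  ∃ M : G.Subgraph, M.IsPerfectMatching

/-- `G` is 3-connected: at least 4 vertices, and deleting any at most 2
vertices leaves a connected graph. -/
def IsThreeConnected {V : Type*} [Fintype V] (G : SimpleGraph V) : Prop :=
  4 ≤ Fintype.card V ∧ ∀ S : Set V, S.ncard ≤ 2 → (G.induce Sᶜ).Connected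

/-- A brick: a 3-connected graph such that deleting any two distinct vertices
leaves a graph with a perfect matching. -/
def IsBrick {V : Type*} [Fintype V] (G : SimpleGraph V) : Prop :=
  IsThreeConnected G ∧
    ∀ u v : V, u ≠ v → HasPerfectMatching (G.induce ({u, v} : Set V)ᶜ)

/-- A minimal brick: a brick such that deleting any edge destroys brickness. -/
def IsMinimalBrick {V : Type*} [Fintype V] (G : SimpleGraph V) : Prop :=
  IsBrick G ∧ ∀ e ∈ G.edgeSet, ¬ IsBrick (G.deleteEdges {e})

/-- The Petersen graph as the Kneser graph K(5,2). -/
def petersen : SimpleGraph {s : Finset (Fin 5) // s.card = 2} :=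
  SimpleGraph.fromRel (fun a b => Disjoint a.1 b.1)

/-! ### Auxiliary machinery -/

abbrev PV := {s : Finset (Fin 5) // s.card = 2}

instance petersenDecAdj : DecidableRel petersen.Adj := fun a b =>
  inferInstanceAs (Decidable (a ≠ b ∧ (Disjoint a.1 b.1 ∨ Disjoint b.1 a.1)))

/-- The action of a permutation of `Fin 5` on vertices of the Petersen graph. -/
def pmap (σ : Equiv.Perm (Fin 5)) (s : PV) : PV :=
  ⟨s.1.map σ.toEmbedding, by rw [Finset.card_map]; exact s.2⟩

lemma pmap_pmap (σ τ : Equiv.Perm (Fin 5)) (s : PV) :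
    pmap σ (pmap τ s) = pmap (σ * τ) s := by
  apply Subtype.ext
  simp [pmap, Finset.map_map]
  rfl

lemma pmap_one (s : PV) : pmap 1 s = s := by
  apply Subtype.ext
  show Finset.map _ _ = _
  ext x
  simp [pmap]
  exact Iff.rfl

lemma pmap_inv_pmap (σ : Equiv.Perm (Fin 5)) (s : PV) : pmap σ⁻¹ (pmap σ s) = s := by
  rw [pmap_pmap, inv_mul_cancel, pmap_one]

lemma pmap_pmap_inv (σ : Equiv.Perm (Fin 5)) (s : PV) : pmap σ (pmap σ⁻¹ s) = s := by
  rw [pmap_pmap, mul_inv_cancel, pmap_one]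

lemma pmap_inj (σ : Equiv.Perm (Fin 5)) {s t : PV} (h : pmap σ s = pmap σ t) : s = t := by
  have := congrArg (pmap σ⁻¹) h
  rwa [pmap_inv_pmap, pmap_inv_pmap] at this

/-- `pmap` as an equivalence. -/
def pequiv (σ : Equiv.Perm (Fin 5)) : PV ≃ PV where
  toFun := pmap σ
  invFun := pmap σ⁻¹
  left_inv := pmap_inv_pmap σ
  right_inv := pmap_pmap_inv σ

lemma adj_pmap (σ : Equiv.Perm (Fin 5)) (x y : PV) :
    petersen.Adj (pmap σ x) (pmap σ y) ↔ petersen.Adj x y := by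
  have hne : pmap σ x ≠ pmap σ y ↔ x ≠ y :=
    ⟨fun h he => h (he ▸ rfl), fun h he => h (pmap_inj σ he)⟩
  simp only [petersen, fromRel_adj, pmap, Finset.disjoint_map]
  exact and_congr hne Iff.rfl

/-- The hypothesis encoding a perfect matching of `petersen` minus two vertices,
given by a global involution-like function. -/
abbrev Hyp (a b : PV) (F : PV → PV) : Prop :=
  ∀ v, v ≠ a → v ≠ b → F v ≠ a ∧ F v ≠ b ∧ petersen.Adj v (F v) ∧ F (F v) = v

lemma mem_pair_compl {a b x : PV} : x ∈ ({a, b} : Set PV)ᶜ ↔ x ≠ a ∧ x ≠ b := by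
  simp [Set.mem_compl_iff, not_or]

lemma hasPM_of_hyp {a b : PV} {F : PV → PV} (h : Hyp a b F) :
    HasPerfectMatching (petersen.induce ({a, b} : Set PV)ᶜ) := by
  classical
  set G' := petersen.induce ({a, b} : Set PV)ᶜ with hG'
  have hsymm : ∀ x y : ↥(({a, b} : Set PV)ᶜ), G'.Adj x y ∧ F x.1 = y.1 →
      G'.Adj y x ∧ F y.1 = x.1 := by
    rintro x y ⟨hadj, hFxy⟩
    obtain ⟨hxa, hxb⟩ := mem_pair_compl.mp x.2
    have := (h x.1 hxa hxb).2.2.2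
    rw [hFxy] at this
    exact ⟨hadj.symm, this⟩
  refine ⟨{ verts := Set.univ,
            Adj := fun x y => G'.Adj x y ∧ F x.1 = y.1,
            adj_sub := fun {x y} hxy => hxy.1,
            edge_vert := fun {x y} _ => trivial,
            symm := ⟨fun x y hxy => hsymm x y hxy⟩ }, ?_, fun _ => trivial⟩
  rintro ⟨x, hx⟩ -
  obtain ⟨hxa, hxb⟩ := mem_pair_compl.mp hx
  obtain ⟨hFa, hFb, hadj, hFF⟩ := h x hxa hxb
  refine ⟨⟨F x, mem_pair_compl.mpr ⟨hFa, hFb⟩⟩, ⟨⟨hadj, rfl⟩, ?_⟩⟩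
  rintro ⟨y, hy⟩ ⟨-, hFy⟩
  exact Subtype.ext hFy.symm

lemma hyp_transfer (σ : Equiv.Perm (Fin 5)) {a b : PV} {F : PV → PV} (h : Hyp a b F) :
    Hyp (pmap σ a) (pmap σ b) (pmap σ ∘ F ∘ pmap σ⁻¹) := by
  intro v hva hvb
  set w := pmap σ⁻¹ v with hw
  have hvw : pmap σ w = v := pmap_pmap_inv σ v
  have hwa : w ≠ a := fun he => hva (by rw [← hvw, he])
  have hwb : w ≠ b := fun he => hvb (by rw [← hvw, he])
  obtain ⟨hFa, hFb, hadj, hFF⟩ := h w hwa hwb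
  refine ⟨fun he => hFa (pmap_inj σ he), fun he => hFb (pmap_inj σ he), ?_, ?_⟩
  · show petersen.Adj v (pmap σ (F w))
    rw [← hvw]
    exact (adj_pmap σ w (F w)).mpr hadj
  · show pmap σ (F (pmap σ⁻¹ (pmap σ (F w)))) = v
    rw [pmap_inv_pmap, hFF, hvw]

/-! ### Explicit matchings for the two representative pairs -/

def vA : PV := ⟨{0, 1}, rfl⟩
def vB : PV := ⟨{2, 3}, rfl⟩
def vC : PV := ⟨{0, 2}, rfl⟩

def F0adj (s : Finset (Fin 5)) : Finset (Fin 5) :=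
  if s = {0, 2} then {1, 4} else if s = {1, 4} then {0, 2} else
  if s = {0, 3} then {2, 4} else if s = {2, 4} then {0, 3} else
  if s = {0, 4} then {1, 3} else if s = {1, 3} then {0, 4} else
  if s = {1, 2} then {3, 4} else if s = {3, 4} then {1, 2} else s

def F0non (s : Finset (Fin 5)) : Finset (Fin 5) :=
  if s = {0, 3} then {1, 4} else if s = {1, 4} then {0, 3} else
  if s = {0, 4} then {2, 3} else if s = {2, 3} then {0, 4} else
  if s = {1, 2} then {3, 4} else if s = {3, 4} then {1, 2} else
  if s = {1, 3} then {2, 4} else if s = {2, 4} then {1, 3} else s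

def Fadj (v : PV) : PV :=
  if h : (F0adj v.1).card = 2 then ⟨F0adj v.1, h⟩ else v

def Fnon (v : PV) : PV :=
  if h : (F0non v.1).card = 2 then ⟨F0non v.1, h⟩ else v

set_option maxRecDepth 10000 in
lemma hyp_adj : Hyp vA vB Fadj := by decide

set_option maxRecDepth 10000 in
lemma hyp_non : Hyp vA vC Fnon := by decide

/-! ### The orbit computation -/

set_option maxRecDepth 40000 in
set_option maxHeartbeats 4000000 in
theorem key : ∀ u v : PV, u ≠ v →
    (∃ σ : Equiv.Perm (Fin 5), pmap σ vA = u ∧ pmap σ vB = v) ∨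
    (∃ σ : Equiv.Perm (Fin 5), pmap σ vA = u ∧ pmap σ vC = v) := by decide

set_option maxRecDepth 10000 in
theorem vtrans : ∀ u : PV, ∃ σ : Equiv.Perm (Fin 5), pmap σ vA = u := by decide

/-! ### BFS connectivity certificate -/

def bstep {V : Type*} [Fintype V] [DecidableEq V] (G : SimpleGraph V)
    [DecidableRel G.Adj] (s : Finset V) : Finset V :=
  s ∪ Finset.univ.filter fun v => ∃ w ∈ s, G.Adj w v

lemma reach_bfs {V : Type*} [Fintype V] [DecidableEq V] (G : SimpleGraph V)
    [DecidableRel G.Adj] (v0 : V) :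
    ∀ n, ∀ v ∈ (bstep G)^[n] {v0}, G.Reachable v0 v := by
  intro n
  induction n with
  | zero => intro v hv; rw [Finset.mem_singleton.mp hv]
  | succ n ih =>
    intro v hv
    rw [Function.iterate_succ_apply'] at hv
    rcases Finset.mem_union.mp hv with h | h
    · exact ih v h
    · obtain ⟨w, hw, hadj⟩ := (Finset.mem_filter.mp h).2
      exact (ih w hw).trans hadj.reachable

lemma connected_of_bfs {V : Type*} [Fintype V] [DecidableEq V] (G : SimpleGraph V)
    [DecidableRel G.Adj] (v0 : V) (n : ℕ) (h : (bstep G)^[n] {v0} = Finset.univ) :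
    G.Connected := by
  haveI : Nonempty V := ⟨v0⟩
  refine ⟨fun u v => ?_⟩
  have hu := reach_bfs G v0 n u (h ▸ Finset.mem_univ u)
  have hv := reach_bfs G v0 n v (h ▸ Finset.mem_univ v)
  exact hu.symm.trans hv

/-! ### Representative connectivity facts -/

instance decMemComplPair (a b : PV) : DecidablePred (· ∈ ({a, b} : Set PV)ᶜ) := fun x =>
  decidable_of_iff (x ≠ a ∧ x ≠ b) mem_pair_compl.symm

instance decMemComplSingle (a : PV) : DecidablePred (· ∈ ({a} : Set PV)ᶜ) := fun x =>
  decidable_of_iff (x ≠ a) (by simp)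

instance decMemComplEmpty : DecidablePred (· ∈ (∅ : Set PV)ᶜ) := fun x =>
  decidable_of_iff True (by simp)

instance decAdjInduce (s : Set PV) : DecidableRel (petersen.induce s).Adj := fun x y =>
  petersenDecAdj x.1 y.1

set_option maxRecDepth 10000 in
lemma conn_empty : (petersen.induce (∅ : Set PV)ᶜ).Connected := by
  apply connected_of_bfs _ ⟨vA, by simp⟩ 9
  decide

set_option maxRecDepth 10000 in
lemma conn_single : (petersen.induce ({vA} : Set PV)ᶜ).Connected := by
  apply connected_of_bfs _ ⟨vB, by decide⟩ 9
  decide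

set_option maxRecDepth 10000 in
lemma conn_pair_adj : (petersen.induce ({vA, vB} : Set PV)ᶜ).Connected := by
  apply connected_of_bfs _ ⟨vC, by decide⟩ 9
  decide

set_option maxRecDepth 10000 in
lemma conn_pair_non : (petersen.induce ({vA, vC} : Set PV)ᶜ).Connected := by
  apply connected_of_bfs _ ⟨vB, by decide⟩ 9
  decide

/-! ### Transferring connectivity along `pmap` -/

def isoInduceCompl (σ : Equiv.Perm (Fin 5)) (s : Set PV) :
    (petersen.induce sᶜ) ≃g (petersen.induce (pmap σ '' s)ᶜ) where
  toEquiv := (pequiv σ).subtypeEquiv (fun x => by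
    simp only [Set.mem_compl_iff, not_iff_not]
    constructor
    · intro hx; exact ⟨x, hx, rfl⟩
    · rintro ⟨y, hy, hxy⟩
      rwa [← pmap_inj σ hxy])
  map_rel_iff' := by
    intro x y
    exact adj_pmap σ x.1 y.1

lemma conn_transfer (σ : Equiv.Perm (Fin 5)) (s : Set PV)
    (h : (petersen.induce sᶜ).Connected) :
    (petersen.induce (pmap σ '' s)ᶜ).Connected :=
  (isoInduceCompl σ s).connected_iff.mp h

/-! ### Main theorem -/

theorem petersen_isBrick : IsBrick petersen := by
  constructor
  · constructor
    · decide
    · intro S hS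
      have hfin : S.Finite := Set.toFinite S
      interval_cases h : S.ncard
      · rw [Set.ncard_eq_zero hfin] at h
        subst h
        exact conn_empty
      · obtain ⟨u, rfl⟩ := Set.ncard_eq_one.mp h
        obtain ⟨σ, hσ⟩ := vtrans u
        have := conn_transfer σ {vA} conn_single
        rwa [Set.image_singleton, hσ] at this
      · obtain ⟨u, v, huv, rfl⟩ := Set.ncard_eq_two.mp h
        rcases key u v huv with ⟨σ, hu, hv⟩ | ⟨σ, hu, hv⟩
        · have := conn_transfer σ {vA, vB} conn_pair_adj
          rwa [Set.image_insert_eq, Set.image_singleton, hu, hv] at this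
        · have := conn_transfer σ {vA, vC} conn_pair_non
          rwa [Set.image_insert_eq, Set.image_singleton, hu, hv] at this
  · intro u v huv
    rcases key u v huv with ⟨σ, hu, hv⟩ | ⟨σ, hu, hv⟩
    · have := hasPM_of_hyp (hyp_transfer σ hyp_adj)
      rwa [hu, hv] at this
    · have := hasPM_of_hyp (hyp_transfer σ hyp_non)
      rwa [hu, hv] at this
end

section
/- For every n ≥ 2 and every edge e of the graph G_n defined below, the graph G_n \ e contains a vertex of degree two; consequently G_n \ e is not a brick. -/
open SimpleGraph

/-- The graph G_n: vertices x, y, z, t (as inl 0, inl 1, inl 2, inl 3) and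
u_i = inr (0, i), v_i = inr (1, i); edges xt, yt, zt and, for each i,
the edges x u_i, y u_i, y v_i, z v_i and u_i v_i. -/
def Gn (n : ℕ) : SimpleGraph (Fin 4 ⊕ (Fin 2 × Fin n)) :=
  SimpleGraph.fromRel (fun a b =>
    (a = .inl 0 ∧ b = .inl 3) ∨ (a = .inl 1 ∧ b = .inl 3) ∨ (a = .inl 2 ∧ b = .inl 3) ∨
    (∃ i : Fin n,
      (a = .inl 0 ∧ b = .inr (0, i)) ∨ (a = .inl 1 ∧ b = .inr (0, i)) ∨
      (a = .inl 1 ∧ b = .inr (1, i)) ∨ (a = .inl 2 ∧ b = .inr (1, i)) ∨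
      (a = .inr (0, i) ∧ b = .inr (1, i))))

/-- A graph containing a vertex of degree two is not a brick. -/
lemma not_brick_of_deg_two {V : Type*} [Fintype V] (G : SimpleGraph V)
    (v : V) (hv : (G.neighborSet v).ncard = 2) : ¬ IsBrick G := by
  rintro ⟨⟨h4, hconn⟩, -⟩
  set S := G.neighborSet v with hS
  have hconn' := hconn S (by omega)
  have hvS : v ∈ Sᶜ := by simp [hS]
  have hcompl : 1 < Sᶜ.ncard := by
    have := Set.ncard_add_ncard_compl S
    have hcard : Nat.card V = Fintype.card V := Nat.card_eq_fintype_card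
    omega
  obtain ⟨w, hwS, hwv⟩ := Set.exists_ne_of_one_lt_ncard hcompl v
  obtain ⟨p⟩ := hconn'.preconnected ⟨v, hvS⟩ ⟨w, hwS⟩
  cases p with
  | nil => exact hwv rfl
  | cons h _ =>
    rename_i u _
    have : G.Adj v u.1 := by simpa using h
    exact u.2 this

/-- Deleting an edge at a degree-three vertex leaves it with degree two. -/
lemma key_s15 {V : Type*} (G : SimpleGraph V) (w a b c : V)
    (hN : G.neighborSet w = {a, b, c}) (hab : a ≠ b) (hac : a ≠ c) (hbc : b ≠ c) :
    ((G.deleteEdges {s(w, a)}).neighborSet w).ncard = 2 := by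
  have hwa : w ≠ a := by
    intro h
    have : G.Adj w a := by rw [← mem_neighborSet, hN]; simp
    rw [h] at this
    exact this.ne rfl
  have : (G.deleteEdges {s(w, a)}).neighborSet w = {b, c} := by
    ext u
    simp only [mem_neighborSet, deleteEdges_adj, Set.mem_singleton_iff]
    constructor
    · rintro ⟨h1, h2⟩
      have hu : u ∈ ({a, b, c} : Set V) := by rw [← hN]; exact h1
      simp only [Set.mem_insert_iff, Set.mem_singleton_iff] at hu ⊢
      rcases hu with h | h | h
      · exact absurd (by rw [h]) h2
      · exact Or.inl h
      · exact Or.inr h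
    · intro hu
      have h1 : G.Adj w u := by
        rw [← mem_neighborSet, hN]
        rcases hu with h | h <;> simp [h]
      refine ⟨h1, fun he => ?_⟩
      rw [Sym2.eq_iff] at he
      rcases he with ⟨-, h⟩ | ⟨h', h''⟩
      · rcases hu with h2 | h2 <;> simp_all
      · exact hwa h'
  rw [this, Set.ncard_pair hbc]

section nbhd
variable (n : ℕ)

lemma nbhd_t1 : (Gn n).neighborSet (.inl 3) = {.inl 0, .inl 1, .inl 2} := by
  ext u; simp [Gn, fromRel_adj]; aesop

lemma nbhd_t2 : (Gn n).neighborSet (.inl 3) = {.inl 1, .inl 0, .inl 2} := by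
  ext u; simp [Gn, fromRel_adj]; aesop

lemma nbhd_t3 : (Gn n).neighborSet (.inl 3) = {.inl 2, .inl 0, .inl 1} := by
  ext u; simp [Gn, fromRel_adj]; aesop

lemma nbhd_u1 (i : Fin n) :
    (Gn n).neighborSet (.inr (0, i)) = {.inl 0, .inl 1, .inr (1, i)} := by
  ext u; simp [Gn, fromRel_adj]; aesop

lemma nbhd_u2 (i : Fin n) :
    (Gn n).neighborSet (.inr (0, i)) = {.inl 1, .inl 0, .inr (1, i)} := by
  ext u; simp [Gn, fromRel_adj]; aesop

lemma nbhd_u3 (i : Fin n) :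
    (Gn n).neighborSet (.inr (0, i)) = {.inr (1, i), .inl 0, .inl 1} := by
  ext u; simp [Gn, fromRel_adj]; aesop

lemma nbhd_v1 (i : Fin n) :
    (Gn n).neighborSet (.inr (1, i)) = {.inl 1, .inl 2, .inr (0, i)} := by
  ext u; simp [Gn, fromRel_adj]; aesop

lemma nbhd_v2 (i : Fin n) :
    (Gn n).neighborSet (.inr (1, i)) = {.inl 2, .inl 1, .inr (0, i)} := by
  ext u; simp [Gn, fromRel_adj]; aesop

lemma nbhd_v3 (i : Fin n) :
    (Gn n).neighborSet (.inr (1, i)) = {.inr (0, i), .inl 1, .inl 2} := by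
  ext u; simp [Gn, fromRel_adj]; aesop

end nbhd

/-- Helper to produce the degree-two witness for a given edge. -/
lemma deg2 (n : ℕ) (e : Sym2 (Fin 4 ⊕ (Fin 2 × Fin n)))
    (w a b c : Fin 4 ⊕ (Fin 2 × Fin n))
    (hN : (Gn n).neighborSet w = {a, b, c})
    (hab : a ≠ b) (hac : a ≠ c) (hbc : b ≠ c) (hew : e = s(w, a)) :
    ∃ v, (((Gn n).deleteEdges {e}).neighborSet v).ncard = 2 :=
  ⟨w, by rw [hew]; exact key_s15 _ w a b c hN hab hac hbc⟩

theorem Gn_delete_edge_degree_two (n : ℕ) (hn : 2 ≤ n) :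
    ∀ e ∈ (Gn n).edgeSet,
      (∃ v, (((Gn n).deleteEdges {e}).neighborSet v).ncard = 2) ∧
      ¬ IsBrick ((Gn n).deleteEdges {e}) := by
  intro e he
  suffices h : ∃ v, (((Gn n).deleteEdges {e}).neighborSet v).ncard = 2 by
    exact ⟨h, fun hb => h.elim fun v hv => not_brick_of_deg_two _ v hv hb⟩
  induction e using Sym2.ind with
  | _ a b =>
    rw [mem_edgeSet, Gn, fromRel_adj] at he
    obtain ⟨hne, hr | hr⟩ := he <;>
      rcases hr with ⟨ha, hb⟩ | ⟨ha, hb⟩ | ⟨ha, hb⟩ | ⟨i, ⟨ha, hb⟩ | ⟨ha, hb⟩ | ⟨ha, hb⟩ | ⟨ha, hb⟩ | ⟨ha, hb⟩⟩ <;>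
      subst ha <;> subst hb
    -- forward direction: e = s(endpoint1, endpoint2)
    · exact deg2 n _ (.inl 3) (.inl 0) (.inl 1) (.inl 2) (nbhd_t1 n)
        (by simp) (by simp) (by simp) Sym2.eq_swap
    · exact deg2 n _ (.inl 3) (.inl 1) (.inl 0) (.inl 2) (nbhd_t2 n)
        (by simp) (by simp) (by simp) Sym2.eq_swap
    · exact deg2 n _ (.inl 3) (.inl 2) (.inl 0) (.inl 1) (nbhd_t3 n)
        (by simp) (by simp) (by simp) Sym2.eq_swap
    · exact deg2 n _ (.inr (0, i)) (.inl 0) (.inl 1) (.inr (1, i)) (nbhd_u1 n i)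
        (by simp) (by simp) (by simp) Sym2.eq_swap
    · exact deg2 n _ (.inr (0, i)) (.inl 1) (.inl 0) (.inr (1, i)) (nbhd_u2 n i)
        (by simp) (by simp) (by simp) Sym2.eq_swap
    · exact deg2 n _ (.inr (1, i)) (.inl 1) (.inl 2) (.inr (0, i)) (nbhd_v1 n i)
        (by simp) (by simp) (by simp) Sym2.eq_swap
    · exact deg2 n _ (.inr (1, i)) (.inl 2) (.inl 1) (.inr (0, i)) (nbhd_v2 n i)
        (by simp) (by simp) (by simp) Sym2.eq_swap
    · exact deg2 n _ (.inr (0, i)) (.inr (1, i)) (.inl 0) (.inl 1) (nbhd_u3 n i)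
        (by simp) (by simp) (by simp) rfl
    -- reverse direction: e = s(endpoint2, endpoint1)
    · exact deg2 n _ (.inl 3) (.inl 0) (.inl 1) (.inl 2) (nbhd_t1 n)
        (by simp) (by simp) (by simp) rfl
    · exact deg2 n _ (.inl 3) (.inl 1) (.inl 0) (.inl 2) (nbhd_t2 n)
        (by simp) (by simp) (by simp) rfl
    · exact deg2 n _ (.inl 3) (.inl 2) (.inl 0) (.inl 1) (nbhd_t3 n)
        (by simp) (by simp) (by simp) rfl
    · exact deg2 n _ (.inr (0, i)) (.inl 0) (.inl 1) (.inr (1, i)) (nbhd_u1 n i)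
        (by simp) (by simp) (by simp) rfl
    · exact deg2 n _ (.inr (0, i)) (.inl 1) (.inl 0) (.inr (1, i)) (nbhd_u2 n i)
        (by simp) (by simp) (by simp) rfl
    · exact deg2 n _ (.inr (1, i)) (.inl 1) (.inl 2) (.inr (0, i)) (nbhd_v1 n i)
        (by simp) (by simp) (by simp) rfl
    · exact deg2 n _ (.inr (1, i)) (.inl 2) (.inl 1) (.inr (0, i)) (nbhd_v2 n i)
        (by simp) (by simp) (by simp) rfl
    · exact deg2 n _ (.inr (0, i)) (.inr (1, i)) (.inl 0) (.inl 1) (nbhd_u3 n i)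
        (by simp) (by simp) (by simp) Sym2.eq_swap
end
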